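/- Let n be a positive natural number, R > 0 and t > 0. Let p₀ and q₀ be probability density functions on ℝⁿ that vanish outside the closed ball of radius R centered at the origin. Define p_t(x) = ∫_{ℝⁿ} (2π(1-e^{-2t}))^{-n/2} · exp(-‖x - e^{-t}·x₀‖² / (2(1-e^{-2t}))) · p₀(x₀) dx₀ and q_t(x) analogously with q₀ in place of p₀. Then for every x ∈ ℝⁿ, ‖∇ log p_t(x) - ∇ log q_t(x)‖ ≤ 2R·e^{-t}/(1-e^{-2t}). -/

import Mathlib

open MeasureTheory Real
open scoped BigOperators

noncomputable section


def kern (n : ℕ) (C s : ℝ) (u : EuclideanSpace ℝ (Fin n)) : ℝ :=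
  C * Real.exp (-‖u‖ ^ 2 / (2 * s))

lemma kern_pos {n : ℕ} {C s : ℝ} (hC : 0 < C) (u : EuclideanSpace ℝ (Fin n)) :
    0 < kern n C s u := mul_pos hC (Real.exp_pos _)

lemma kern_le {n : ℕ} {C s : ℝ} (hC : 0 < C) (hs : 0 < s) (u : EuclideanSpace ℝ (Fin n)) :
    kern n C s u ≤ C := by
  have h1 : -‖u‖ ^ 2 / (2 * s) ≤ 0 := by
    apply div_nonpos_of_nonpos_of_nonneg
    · simpa using sq_nonneg ‖u‖
    · positivity
  calc C * Real.exp (-‖u‖ ^ 2 / (2 * s)) ≤ C * 1 := by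
        exact mul_le_mul_of_nonneg_left (by simpa using Real.exp_le_exp.mpr h1) hC.le
    _ = C := mul_one C

lemma kern_continuous (n : ℕ) (C s : ℝ) : Continuous (kern n C s) := by
  unfold kern; fun_prop

lemma kern_hasFDerivAt {n : ℕ} {C s : ℝ} (hs : 0 < s) (v y : EuclideanSpace ℝ (Fin n)) :
    HasFDerivAt (fun y' => kern n C s (y' - v))
      ((kern n C s (y - v) * (-s⁻¹)) • (innerSL ℝ (y - v))) y := by
  have h1 : HasFDerivAt (fun y' : EuclideanSpace ℝ (Fin n) => y' - v)
      (ContinuousLinearMap.id ℝ _) y := (hasFDerivAt_id y).sub_const v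
  have h2 := h1.norm_sq
  have h3 := ((h2.const_mul (-(2 * s)⁻¹)).exp).const_mul C
  have hfun : (fun y' : EuclideanSpace ℝ (Fin n) =>
      C * Real.exp (-(2 * s)⁻¹ * ‖y' - v‖ ^ 2)) = fun y' => kern n C s (y' - v) := by
    funext y'
    rw [show (-(2 * s)⁻¹ * ‖y' - v‖ ^ 2 : ℝ) = -‖y' - v‖ ^ 2 / (2 * s) from by ring]
    rfl
  rw [← hfun]
  refine h3.congr_fderiv ?_
  ext h
  simp only [kern, ContinuousLinearMap.smul_apply, ContinuousLinearMap.comp_apply,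
    ContinuousLinearMap.id_apply, ContinuousLinearMap.smul_apply, smul_eq_mul, innerSL_apply_apply]
  rw [show (-(2 * s)⁻¹ * ‖y - v‖ ^ 2 : ℝ) = -‖y - v‖ ^ 2 / (2 * s) from by ring]
  rw [nsmul_eq_mul]
  field_simp
  ring

def Dmap (n : ℕ) (C s a : ℝ) (p₀ : EuclideanSpace ℝ (Fin n) → ℝ)
    (y x₀ : EuclideanSpace ℝ (Fin n)) : EuclideanSpace ℝ (Fin n) →L[ℝ] ℝ :=
  (kern n C s (y - a • x₀) * p₀ x₀ * (-s⁻¹)) • innerSL ℝ (y - a • x₀)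

lemma Dmap_hasFDerivAt {n : ℕ} {C s : ℝ} (hs : 0 < s) (a : ℝ)
    (p₀ : EuclideanSpace ℝ (Fin n) → ℝ) (x₀ y : EuclideanSpace ℝ (Fin n)) :
    HasFDerivAt (fun y' => kern n C s (y' - a • x₀) * p₀ x₀) (Dmap n C s a p₀ y x₀) y := by
  have h := (kern_hasFDerivAt (C := C) hs (a • x₀) y).mul_const (p₀ x₀)
  refine h.congr_fderiv ?_
  rw [Dmap, smul_smul]
  congr 1
  ring

lemma Dmap_norm {n : ℕ} {C s a : ℝ} (hC : 0 < C) (hs : 0 < s)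
    {p₀ : EuclideanSpace ℝ (Fin n) → ℝ} (hnn : ∀ x, 0 ≤ p₀ x)
    (y x₀ : EuclideanSpace ℝ (Fin n)) :
    ‖Dmap n C s a p₀ y x₀‖
      = kern n C s (y - a • x₀) * p₀ x₀ * s⁻¹ * ‖y - a • x₀‖ := by
  rw [Dmap]
  rw [norm_smul (kern n C s (y - a • x₀) * p₀ x₀ * -s⁻¹) (innerSL ℝ (y - a • x₀))]
  rw [innerSL_apply_norm, Real.norm_eq_abs, abs_mul, abs_mul, abs_neg,
    abs_of_nonneg (kern_pos hC _).le, abs_of_nonneg (hnn _), abs_of_nonneg (inv_nonneg.mpr hs.le)]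

lemma mul4_le {k c p si nu B : ℝ} (hkc : k ≤ c) (hp : 0 ≤ p) (hsi : 0 ≤ si)
    (hnuB : nu ≤ B) (hnu : 0 ≤ nu) (hc : 0 ≤ c) :
    k * p * si * nu ≤ c * p * si * B :=
  mul_le_mul (mul_le_mul_of_nonneg_right (mul_le_mul_of_nonneg_right hkc hp) hsi) hnuB hnu
    (mul_nonneg (mul_nonneg hc hp) hsi)

lemma mul3_le {k c p nu B : ℝ} (hkc : k ≤ c) (hp : 0 ≤ p)
    (hnuB : nu ≤ B) (hnu : 0 ≤ nu) (hc : 0 ≤ c) :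
    k * p * nu ≤ c * p * B :=
  mul_le_mul (mul_le_mul_of_nonneg_right hkc hp) hnuB hnu (mul_nonneg hc hp)

lemma ou_score_aux {n : ℕ} {s a C R : ℝ} (hs : 0 < s) (ha : 0 < a) (hC : 0 < C)
    (hR : 0 < R) (p₀ : EuclideanSpace ℝ (Fin n) → ℝ)
    (hnn : ∀ x, 0 ≤ p₀ x) (hint : Integrable p₀) (hone : ∫ x, p₀ x = 1)
    (hsupp : ∀ x₀ : EuclideanSpace ℝ (Fin n), ¬ ‖x₀‖ ≤ R → p₀ x₀ = 0)
    (x : EuclideanSpace ℝ (Fin n)) :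
    ∃ m : EuclideanSpace ℝ (Fin n), ‖m‖ ≤ R ∧
      gradient (fun y => Real.log
          (∫ x₀, C * Real.exp (-‖y - a • x₀‖ ^ 2 / (2 * s)) * p₀ x₀)) x
        = (s⁻¹ * a) • m - s⁻¹ • x := by
  have hkc : ∀ y : EuclideanSpace ℝ (Fin n),
      Continuous fun x₀ : EuclideanSpace ℝ (Fin n) => kern n C s (y - a • x₀) :=
    fun y => (kern_continuous n C s).comp (continuous_const.sub (continuous_id.const_smul a))
  have hcmeas : ∀ y : EuclideanSpace ℝ (Fin n), AEStronglyMeasurable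
      (fun x₀ => kern n C s (y - a • x₀) * p₀ x₀) volume :=
    fun y => ((hkc y).aestronglyMeasurable).mul hint.1
  have hc_nn : ∀ y x₀ : EuclideanSpace ℝ (Fin n), 0 ≤ kern n C s (y - a • x₀) * p₀ x₀ :=
    fun y x₀ => mul_nonneg (kern_pos hC _).le (hnn _)
  have hcint : ∀ y : EuclideanSpace ℝ (Fin n),
      Integrable (fun x₀ => kern n C s (y - a • x₀) * p₀ x₀) := by
    intro y
    refine (hint.const_mul C).mono' (hcmeas y) (Filter.Eventually.of_forall fun x₀ => ?_)
    rw [Real.norm_eq_abs, abs_of_nonneg (hc_nn y x₀)]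
    exact mul_le_mul_of_nonneg_right (kern_le hC hs _) (hnn _)
  set P : EuclideanSpace ℝ (Fin n) → ℝ :=
    fun y => ∫ x₀, kern n C s (y - a • x₀) * p₀ x₀ with hPdef
  have hPpos : 0 < P x := by
    rw [integral_pos_iff_support_of_nonneg (hc_nn x) (hcint x)]
    have hsupp_eq : (Function.support fun x₀ => kern n C s (x - a • x₀) * p₀ x₀)
        = Function.support p₀ := by
      ext x₀
      simp only [Function.mem_support]
      constructor
      · intro h hp; exact h (by rw [hp, mul_zero])
      · intro h hmul
        rcases mul_eq_zero.mp hmul with h1 | h1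
        · exact absurd h1 (kern_pos hC _).ne'
        · exact h h1
    rw [hsupp_eq]
    exact (integral_pos_iff_support_of_nonneg hnn hint).mp (by rw [hone]; norm_num)
  have hD_meas : AEStronglyMeasurable (fun x₀ => Dmap n C s a p₀ x x₀) volume := by
    have : AEStronglyMeasurable
        (fun x₀ : EuclideanSpace ℝ (Fin n) =>
          (kern n C s (x - a • x₀) * p₀ x₀ * (-s⁻¹)) • innerSL ℝ (x - a • x₀)) volume := by
      exact ((hcmeas x).mul_const (-s⁻¹)).smul
        (((innerSL ℝ).continuous.comp
          (continuous_const.sub (continuous_id.const_smul a))).aestronglyMeasurable)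
    exact this
  have hbound : ∀ x₀ : EuclideanSpace ℝ (Fin n), ∀ y ∈ Metric.ball x 1,
      ‖Dmap n C s a p₀ y x₀‖ ≤ C * s⁻¹ * (‖x‖ + 1 + a * R) * p₀ x₀ := by
    intro x₀ y hy
    rw [Dmap_norm hC hs hnn]
    by_cases hx₀ : ‖x₀‖ ≤ R
    · have hy' : ‖y‖ ≤ ‖x‖ + 1 := by
        have h2 : ‖y - x‖ < 1 := mem_ball_iff_norm.mp hy
        calc ‖y‖ = ‖y - x + x‖ := by rw [sub_add_cancel]
          _ ≤ ‖y - x‖ + ‖x‖ := norm_add_le _ _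
          _ ≤ ‖x‖ + 1 := by linarith
      have h1 : ‖y - a • x₀‖ ≤ ‖x‖ + 1 + a * R := by
        calc ‖y - a • x₀‖ ≤ ‖y‖ + ‖a • x₀‖ := norm_sub_le _ _
          _ = ‖y‖ + a * ‖x₀‖ := by rw [norm_smul, Real.norm_eq_abs, abs_of_nonneg ha.le]
          _ ≤ ‖x‖ + 1 + a * R := by
              have := mul_le_mul_of_nonneg_left hx₀ ha.le
              linarith
      calc kern n C s (y - a • x₀) * p₀ x₀ * s⁻¹ * ‖y - a • x₀‖
          ≤ C * p₀ x₀ * s⁻¹ * (‖x‖ + 1 + a * R) := by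
            exact mul4_le (kern_le hC hs _) (hnn _) (inv_nonneg.mpr hs.le) h1 (norm_nonneg _) hC.le
        _ = C * s⁻¹ * (‖x‖ + 1 + a * R) * p₀ x₀ := by ring
    · rw [hsupp x₀ hx₀]
      simp
  have hD_int : Integrable (fun x₀ => Dmap n C s a p₀ x x₀) := by
    refine (hint.const_mul (C * s⁻¹ * (‖x‖ + 1 + a * R))).mono' hD_meas
      (Filter.Eventually.of_forall fun x₀ => ?_)
    exact hbound x₀ x (Metric.mem_ball_self one_pos)
  have hderiv : HasFDerivAt P (∫ x₀, Dmap n C s a p₀ x x₀) x := by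
    exact hasFDerivAt_integral_of_dominated_of_fderiv_le (Metric.ball_mem_nhds x one_pos)
      (Filter.Eventually.of_forall fun y => hcmeas y) (hcint x) hD_meas
      (Filter.Eventually.of_forall fun x₀ y hy => hbound x₀ y hy)
      (hint.const_mul _)
      (Filter.Eventually.of_forall fun x₀ y _ => Dmap_hasFDerivAt hs a p₀ x₀ y)
  set w : EuclideanSpace ℝ (Fin n) → EuclideanSpace ℝ (Fin n) :=
    fun x₀ => (kern n C s (x - a • x₀) * p₀ x₀ * (-s⁻¹)) • (x - a • x₀) with hwdef
  have hw_int : Integrable w := by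
    refine (hint.const_mul (C * s⁻¹ * (‖x‖ + a * R))).mono'
      ((((hkc x).aestronglyMeasurable.mul hint.1).mul_const (-s⁻¹)).smul
        ((continuous_const.sub (continuous_id.const_smul a)).aestronglyMeasurable))
      (Filter.Eventually.of_forall fun x₀ => ?_)
    rw [hwdef]
    simp only
    rw [norm_smul, Real.norm_eq_abs, abs_mul, abs_neg,
      abs_of_nonneg (hc_nn x x₀), abs_of_nonneg (inv_nonneg.mpr hs.le)]
    by_cases hx₀ : ‖x₀‖ ≤ R
    · have h1 : ‖x - a • x₀‖ ≤ ‖x‖ + a * R := by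
        calc ‖x - a • x₀‖ ≤ ‖x‖ + ‖a • x₀‖ := norm_sub_le _ _
          _ = ‖x‖ + a * ‖x₀‖ := by rw [norm_smul, Real.norm_eq_abs, abs_of_nonneg ha.le]
          _ ≤ ‖x‖ + a * R := by nlinarith
      calc kern n C s (x - a • x₀) * p₀ x₀ * s⁻¹ * ‖x - a • x₀‖
          ≤ C * p₀ x₀ * s⁻¹ * (‖x‖ + a * R) := by
            exact mul4_le (kern_le hC hs _) (hnn _) (inv_nonneg.mpr hs.le) h1 (norm_nonneg _) hC.le
        _ = C * s⁻¹ * (‖x‖ + a * R) * p₀ x₀ := by ring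
    · rw [hsupp x₀ hx₀]
      simp
  have hV_int : Integrable (fun x₀ => (kern n C s (x - a • x₀) * p₀ x₀) • x₀) := by
    refine (hint.const_mul (C * R)).mono'
      ((hcmeas x).smul aestronglyMeasurable_id)
      (Filter.Eventually.of_forall fun x₀ => ?_)
    rw [norm_smul, Real.norm_eq_abs, abs_of_nonneg (hc_nn x x₀)]
    by_cases hx₀ : ‖x₀‖ ≤ R
    · calc kern n C s (x - a • x₀) * p₀ x₀ * ‖x₀‖
          ≤ C * p₀ x₀ * R := by
            exact mul3_le (kern_le hC hs _) (hnn _) hx₀ (norm_nonneg _) hC.le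
        _ = C * R * p₀ x₀ := by ring
    · rw [hsupp x₀ hx₀]
      simp
  have htd : (InnerProductSpace.toDual ℝ (EuclideanSpace ℝ (Fin n))) (∫ x₀, w x₀)
      = ∫ x₀, Dmap n C s a p₀ x x₀ := by
    apply ContinuousLinearMap.ext
    intro h
    rw [ContinuousLinearMap.integral_apply hD_int, InnerProductSpace.toDual_apply_apply]
    calc (inner ℝ (∫ x₀, w x₀) h : ℝ) = inner ℝ h (∫ x₀, w x₀) := real_inner_comm _ _
      _ = ∫ x₀, (inner ℝ h (w x₀) : ℝ) := (integral_inner hw_int h).symm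
      _ = ∫ x₀, Dmap n C s a p₀ x x₀ h := by
          congr 1
          funext x₀
          rw [real_inner_comm, hwdef]
          simp only [Dmap, ContinuousLinearMap.smul_apply, innerSL_apply_apply, smul_eq_mul]
          rw [real_inner_smul_left]
  have hlog : HasGradientAt (fun y => Real.log (P y)) ((P x)⁻¹ • ∫ x₀, w x₀) x := by
    rw [hasGradientAt_iff_hasFDerivAt]
    have h1 := (Real.hasDerivAt_log hPpos.ne').comp_hasFDerivAt x hderiv
    have h2 : (InnerProductSpace.toDual ℝ (EuclideanSpace ℝ (Fin n)))
        ((P x)⁻¹ • ∫ x₀, w x₀) = (P x)⁻¹ • ∫ x₀, Dmap n C s a p₀ x x₀ := by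
      rw [map_smulₛₗ, htd]
      simp [starRingEnd_apply]
    rw [h2]
    exact h1
  have hWsplit : (∫ x₀, w x₀)
      = (s⁻¹ * a) • (∫ x₀, (kern n C s (x - a • x₀) * p₀ x₀) • x₀)
        - s⁻¹ • ((P x) • x) := by
    have hfun : w = fun x₀ =>
        (s⁻¹ * a) • ((kern n C s (x - a • x₀) * p₀ x₀) • x₀)
          - s⁻¹ • ((kern n C s (x - a • x₀) * p₀ x₀) • x) := by
      funext x₀
      rw [hwdef]
      simp only
      match_scalars <;> field_simp <;> ring
    have hint1 : Integrable (fun x₀ =>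
        (s⁻¹ * a) • ((kern n C s (x - a • x₀) * p₀ x₀) • x₀)) := hV_int.smul (s⁻¹ * a)
    have hint2 : Integrable (fun x₀ =>
        s⁻¹ • ((kern n C s (x - a • x₀) * p₀ x₀) • x)) := ((hcint x).smul_const x).smul s⁻¹
    rw [hfun, integral_sub hint1 hint2, integral_smul, integral_smul, integral_smul_const]
  refine ⟨(P x)⁻¹ • ∫ x₀, (kern n C s (x - a • x₀) * p₀ x₀) • x₀, ?_, ?_⟩
  · rw [norm_smul, Real.norm_eq_abs, abs_of_nonneg (inv_nonneg.mpr hPpos.le)]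
    have hVle : ‖∫ x₀, (kern n C s (x - a • x₀) * p₀ x₀) • x₀‖ ≤ R * P x := by
      have h1 : ‖∫ x₀, (kern n C s (x - a • x₀) * p₀ x₀) • x₀‖
          ≤ ∫ x₀, R * (kern n C s (x - a • x₀) * p₀ x₀) := by
        refine norm_integral_le_of_norm_le ((hcint x).const_mul R)
          (Filter.Eventually.of_forall fun x₀ => ?_)
        rw [norm_smul, Real.norm_eq_abs, abs_of_nonneg (hc_nn x x₀)]
        by_cases hx₀ : ‖x₀‖ ≤ R
        · calc kern n C s (x - a • x₀) * p₀ x₀ * ‖x₀‖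
              ≤ kern n C s (x - a • x₀) * p₀ x₀ * R :=
                mul_le_mul_of_nonneg_left hx₀ (hc_nn x x₀)
              _ = R * (kern n C s (x - a • x₀) * p₀ x₀) := by ring
        · rw [hsupp x₀ hx₀]
          simp
      rw [integral_const_mul] at h1
      exact h1
    calc (P x)⁻¹ * ‖∫ x₀, (kern n C s (x - a • x₀) * p₀ x₀) • x₀‖
        ≤ (P x)⁻¹ * (R * P x) := by
          exact mul_le_mul_of_nonneg_left hVle (inv_nonneg.mpr hPpos.le)
      _ = R := by field_simp
  · have hfeq : (fun y => Real.log
        (∫ x₀, C * Real.exp (-‖y - a • x₀‖ ^ 2 / (2 * s)) * p₀ x₀))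
        = fun y => Real.log (P y) := rfl
    rw [hfeq, hlog.gradient, hWsplit]
    match_scalars <;> field_simp

/-- score MSE bound for the time-reparameterized Ornstein–Uhlenbeck process
(paper's Theorem 1 specialized to `a = e^{-t}`, `s = 1 - e^{-2t}`):
the score difference of the two marginals is bounded by `2R e^{-t} / (1 - e^{-2t})`. -/
theorem ou_score_mse_bound
    (n : ℕ) (hn : 0 < n) (R t : ℝ) (hR : 0 < R) (ht : 0 < t)
    (p₀ q₀ : EuclideanSpace ℝ (Fin n) → ℝ)
    (hp₀nonneg : ∀ x, 0 ≤ p₀ x) (hq₀nonneg : ∀ x, 0 ≤ q₀ x)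
    (hp₀int : Integrable p₀) (hq₀int : Integrable q₀)
    (hp₀one : ∫ x, p₀ x = 1) (hq₀one : ∫ x, q₀ x = 1)
    (hp₀supp : ∀ x, x ∉ Metric.closedBall (0 : EuclideanSpace ℝ (Fin n)) R → p₀ x = 0)
    (hq₀supp : ∀ x, x ∉ Metric.closedBall (0 : EuclideanSpace ℝ (Fin n)) R → q₀ x = 0)
    (pt qt : EuclideanSpace ℝ (Fin n) → ℝ)
    (hpt : ∀ x, pt x =
      ∫ x₀, (2 * π * (1 - Real.exp (-2 * t))) ^ (-(n : ℝ) / 2) *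
        Real.exp (-‖x - Real.exp (-t) • x₀‖ ^ 2 / (2 * (1 - Real.exp (-2 * t)))) * p₀ x₀)
    (hqt : ∀ x, qt x =
      ∫ x₀, (2 * π * (1 - Real.exp (-2 * t))) ^ (-(n : ℝ) / 2) *
        Real.exp (-‖x - Real.exp (-t) • x₀‖ ^ 2 / (2 * (1 - Real.exp (-2 * t)))) * q₀ x₀) :
    ∀ x : EuclideanSpace ℝ (Fin n),
      ‖gradient (fun y => Real.log (pt y)) x - gradient (fun y => Real.log (qt y)) x‖
        ≤ 2 * R * Real.exp (-t) / (1 - Real.exp (-2 * t)) := by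
  intro x
  have hs : 0 < 1 - Real.exp (-2 * t) := by
    have h1 : Real.exp (-2 * t) < 1 := by
      calc Real.exp (-2 * t) < Real.exp 0 := Real.exp_lt_exp.mpr (by linarith)
        _ = 1 := Real.exp_zero
    linarith
  have ha : 0 < Real.exp (-t) := Real.exp_pos _
  have hC : 0 < (2 * π * (1 - Real.exp (-2 * t))) ^ (-(n : ℝ) / 2) := by
    apply Real.rpow_pos_of_pos
    have := Real.pi_pos
    positivity
  have hsuppP : ∀ x₀ : EuclideanSpace ℝ (Fin n), ¬ ‖x₀‖ ≤ R → p₀ x₀ = 0 := by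
    intro x₀ h
    exact hp₀supp x₀ (by simpa [Metric.mem_closedBall, dist_zero_right] using h)
  have hsuppQ : ∀ x₀ : EuclideanSpace ℝ (Fin n), ¬ ‖x₀‖ ≤ R → q₀ x₀ = 0 := by
    intro x₀ h
    exact hq₀supp x₀ (by simpa [Metric.mem_closedBall, dist_zero_right] using h)
  obtain ⟨mp, hmp, hgp⟩ := ou_score_aux (s := 1 - Real.exp (-2 * t)) (a := Real.exp (-t))
    (C := (2 * π * (1 - Real.exp (-2 * t))) ^ (-(n : ℝ) / 2)) hs ha hC hR p₀
    hp₀nonneg hp₀int hp₀one hsuppP x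
  obtain ⟨mq, hmq, hgq⟩ := ou_score_aux (s := 1 - Real.exp (-2 * t)) (a := Real.exp (-t))
    (C := (2 * π * (1 - Real.exp (-2 * t))) ^ (-(n : ℝ) / 2)) hs ha hC hR q₀
    hq₀nonneg hq₀int hq₀one hsuppQ x
  have h1 : (fun y => Real.log (pt y)) = fun y => Real.log
      (∫ x₀, (2 * π * (1 - Real.exp (-2 * t))) ^ (-(n : ℝ) / 2) *
        Real.exp (-‖y - Real.exp (-t) • x₀‖ ^ 2 / (2 * (1 - Real.exp (-2 * t)))) * p₀ x₀) :=
    funext fun y => by rw [hpt y]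
  have h2 : (fun y => Real.log (qt y)) = fun y => Real.log
      (∫ x₀, (2 * π * (1 - Real.exp (-2 * t))) ^ (-(n : ℝ) / 2) *
        Real.exp (-‖y - Real.exp (-t) • x₀‖ ^ 2 / (2 * (1 - Real.exp (-2 * t)))) * q₀ x₀) :=
    funext fun y => by rw [hqt y]
  rw [h1, h2, hgp, hgq]
  have h3 : ((1 - Real.exp (-2 * t))⁻¹ * Real.exp (-t)) • mp
        - (1 - Real.exp (-2 * t))⁻¹ • x
        - (((1 - Real.exp (-2 * t))⁻¹ * Real.exp (-t)) • mq
          - (1 - Real.exp (-2 * t))⁻¹ • x)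
      = ((1 - Real.exp (-2 * t))⁻¹ * Real.exp (-t)) • (mp - mq) := by
    rw [smul_sub]; abel
  rw [h3, norm_smul, Real.norm_eq_abs, abs_of_nonneg (by positivity)]
  calc (1 - Real.exp (-2 * t))⁻¹ * Real.exp (-t) * ‖mp - mq‖
      ≤ (1 - Real.exp (-2 * t))⁻¹ * Real.exp (-t) * (R + R) := by
        apply mul_le_mul_of_nonneg_left _ (by positivity)
        exact (norm_sub_le _ _).trans (add_le_add hmp hmq)
    _ = 2 * R * Real.exp (-t) / (1 - Real.exp (-2 * t)) := by
        field_simp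
        ring
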